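/- Every extension base is a maximal consistent subset of the formulas of the theory: for every linear order e on ι, (i) B(e) ⊆ {form d | d : ι}, (ii) B(e) ∪ SPO is satisfiable, and (iii) for every d : ι with form d ∉ B(e), the theory B(e) ∪ {form d} ∪ SPO is unsatisfiable. -/

import Mathlib

open FirstOrder Language

namespace Brevis

/-- The base language with a single binary relation symbol `R`. -/
def baseLang : Language where
  Functions := fun _ => Empty
  Relations := fun n => match n with
    | 2 => Unit
    | _ => Empty

/-- The binary relation symbol `R` of `baseLang`. -/
def Rsym : baseLang.Relations 2 := Unit.unit

/-- The base language with a binary relation symbol `R` and one 0-ary relation symbol `P`. -/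
def baseLangP : Language where
  Functions := fun _ => Empty
  Relations := fun n => match n with
    | 0 => Unit
    | 2 => Unit
    | _ => Empty

/-- The binary relation symbol `R` of `baseLangP`. -/
def RsymP : baseLangP.Relations 2 := Unit.unit

/-- The 0-ary relation symbol `P` of `baseLangP`. -/
def Psym : baseLangP.Relations 0 := Unit.unit

/-- The atomic sentence `p` given by the propositional symbol `P`. -/
def pSent (ι : Type) : (baseLangP[[ι]]).Sentence :=
  Relations.formula (Sum.inl Psym) ![]

variable (L₀ : FirstOrder.Language.{0, 0}) (R : L₀.Relations 2) (ι : Type) [Fintype ι]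

/-- The atomic sentence `d < d'`, i.e. `R (c_d) (c_d')`. -/
def ltSent (d d' : ι) : (L₀[[ι]]).Sentence :=
  Relations.boundedFormula₂ (Sum.inl R) (L₀.con d).term (L₀.con d').term

/-- The theory `SPO` asserting that `R` is a strict partial order (irreflexive and transitive). -/
def spo : (L₀[[ι]]).Theory :=
  {Relations.irreflexive (Sum.inl R), Relations.transitive (Sum.inl R)}

/-- A set of sentences is consistent iff together with `SPO` it is satisfiable. -/
def Consistent (S : (L₀[[ι]]).Theory) : Prop :=
  Theory.IsSatisfiable (S ∪ spo L₀ R ι)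

open scoped Classical in
/-- The extension base `B(e)` determined by the linear order `e` on the names. -/
noncomputable def base (e : LinearOrder ι) (form : ι → (L₀[[ι]]).Sentence) :
    (L₀[[ι]]).Theory :=
  letI := e
  (Finset.univ.sort (· ≤ · : ι → ι → Prop)).foldl
    (fun B d => if Consistent L₀ R ι (B ∪ {form d}) then B ∪ {form d} else B) ∅

/-- The deductive closure (modulo `SPO`) of a set of sentences:
all sentences satisfied in every model of `S ∪ SPO`. -/
def closure (S : (L₀[[ι]]).Theory) : Set (L₀[[ι]]).Sentence :=
  {φ | (S ∪ spo L₀ R ι) ⊨ᵇ φ}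

/-- The extension `E(e)` generated by the linear order `e`. -/
noncomputable def extension (e : LinearOrder ι) (form : ι → (L₀[[ι]]).Sentence) :
    Set (L₀[[ι]]).Sentence :=
  closure L₀ R ι (base L₀ R ι e form)

/-- A strict partial order `p` on the names is compatible with `S` iff
`S ∪ SPO ∪ {d < d' | p d d'} ∪ {¬ (d < d') | ¬ p d d'}` is satisfiable. -/
def Compatible (p : ι → ι → Prop) (S : (L₀[[ι]]).Theory) : Prop :=
  Theory.IsSatisfiable
    (S ∪ spo L₀ R ι ∪ {φ | ∃ d d', p d d' ∧ φ = ltSent L₀ R ι d d'} ∪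
      {φ | ∃ d d', ¬ p d d' ∧ φ = ∼(ltSent L₀ R ι d d')})

/-- `Exts form S`: the set of extensions `E(e)` where `e` is a linear order extending some
strict partial order compatible with `S`. -/
def Exts (form : ι → (L₀[[ι]]).Sentence) (S : (L₀[[ι]]).Theory) :
    Set (Set (L₀[[ι]]).Sentence) :=
  {E | ∃ (e : LinearOrder ι) (p : ι → ι → Prop), IsStrictOrder ι p ∧
    Compatible L₀ R ι p S ∧ (∀ d d', p d d' → e.lt d d') ∧ E = extension L₀ R ι e form}

/-- The operator `C`. -/
def C (form : ι → (L₀[[ι]]).Sentence) (S : (L₀[[ι]]).Theory) : (L₀[[ι]]).Theory :=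
  ⋂₀ Exts L₀ R ι form S

/-- The least fixed point of `C` (Knaster–Tarski): the set of accepted conclusions. -/
def lfpC (form : ι → (L₀[[ι]]).Sentence) : (L₀[[ι]]).Theory :=
  sInf {S | C L₀ R ι form S ⊆ S}



section Aux

variable {ι : Type} [Fintype ι] (form : ι → (baseLang[[ι]]).Sentence)

open scoped Classical

noncomputable def stepF (B : (baseLang[[ι]]).Theory) (d : ι) : (baseLang[[ι]]).Theory :=
  if Consistent baseLang Rsym ι (B ∪ {form d}) then B ∪ {form d} else B

lemma subset_stepF (B : (baseLang[[ι]]).Theory) (d : ι) : B ⊆ stepF form B d := by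
  unfold stepF; split <;> simp [Set.subset_union_left]

lemma subset_foldl (l : List ι) : ∀ B : (baseLang[[ι]]).Theory, B ⊆ l.foldl (stepF form) B := by
  induction l with
  | nil => intro B; simp
  | cons d l ih =>
    intro B
    exact (subset_stepF form B d).trans (ih (stepF form B d))

lemma foldl_range (l : List ι) : ∀ B : (baseLang[[ι]]).Theory,
    B ⊆ Set.range form → l.foldl (stepF form) B ⊆ Set.range form := by
  induction l with
  | nil => intro B h; simpa using h
  | cons d l ih =>
    intro B h
    refine ih _ ?_
    unfold stepF; split
    · exact Set.union_subset h (by simp)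
    · exact h

lemma foldl_consistent (l : List ι) : ∀ B : (baseLang[[ι]]).Theory,
    Consistent baseLang Rsym ι B → Consistent baseLang Rsym ι (l.foldl (stepF form) B) := by
  induction l with
  | nil => intro B h; simpa using h
  | cons d l ih =>
    intro B h
    refine ih _ ?_
    unfold stepF; split
    · assumption
    · exact h

lemma not_consistent_mono {B B' : (baseLang[[ι]]).Theory} (h : B ⊆ B') (d : ι)
    (hn : ¬ Consistent baseLang Rsym ι (B ∪ {form d})) :
    ¬ Consistent baseLang Rsym ι (B' ∪ {form d}) := by
  intro hc
  exact hn (hc.mono (Set.union_subset_union_left _ (Set.union_subset_union_left _ h)))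

lemma foldl_mem (l : List ι) : ∀ B : (baseLang[[ι]]).Theory, ∀ d ∈ l,
    form d ∈ l.foldl (stepF form) B ∨
      ¬ Consistent baseLang Rsym ι (l.foldl (stepF form) B ∪ {form d}) := by
  induction l with
  | nil => intro B d h; simp at h
  | cons d' l ih =>
    intro B d hd
    simp only [List.foldl_cons]
    rcases List.mem_cons.1 hd with rfl | hd
    · by_cases hc : Consistent baseLang Rsym ι (B ∪ {form d})
      · left
        have : form d ∈ stepF form B d := by unfold stepF; rw [if_pos hc]; simp
        exact subset_foldl form l _ this
      · right
        have hB : stepF form B d = B := by unfold stepF; rw [if_neg hc]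
        rw [hB]
        exact not_consistent_mono form (subset_foldl form l B) d hc
    · exact ih _ d hd

instance : baseLang.Structure PUnit where
  funMap := fun f => f.elim
  RelMap := fun {n} r _ => False

lemma spo_satisfiable : Theory.IsSatisfiable (spo baseLang Rsym ι) := by
  letI : (constantsOn ι).Structure PUnit := constantsOn.structure (fun _ => PUnit.unit)
  refine ⟨{ Carrier := PUnit, is_model := ⟨fun {φ} hφ => ?_⟩ }⟩
  rcases hφ with rfl | rfl
  · refine Relations.realize_irreflexive.2 ⟨?_⟩
    intro x
    exact fun h => h
  · refine Relations.realize_transitive.2 ⟨?_⟩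
    intro x y z h
    exact h.elim

lemma base_eq (e : LinearOrder ι) :
    base baseLang Rsym ι e form =
      (letI := e; (Finset.univ.sort (· ≤ · : ι → ι → Prop)).foldl (stepF form) ∅) := rfl

end Aux

/-- Every extension base is a maximal consistent subset of the formulas of the theory. -/
theorem base_maximal_consistent (ι : Type) [Fintype ι]
    (form : ι → (baseLang[[ι]]).Sentence) (e : LinearOrder ι) :
    base baseLang Rsym ι e form ⊆ Set.range form ∧
    Theory.IsSatisfiable (base baseLang Rsym ι e form ∪ spo baseLang Rsym ι) ∧
    ∀ d : ι, form d ∉ base baseLang Rsym ι e form →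
      ¬ Theory.IsSatisfiable (base baseLang Rsym ι e form ∪ {form d} ∪ spo baseLang Rsym ι) := by
  letI := e
  rw [base_eq form e]
  set l := (Finset.univ.sort (· ≤ · : ι → ι → Prop)) with hl
  have hcons0 : Consistent baseLang Rsym ι (∅ : (baseLang[[ι]]).Theory) := by
    unfold Consistent
    rw [Set.empty_union]
    exact spo_satisfiable
  refine ⟨foldl_range form l ∅ (by simp), foldl_consistent form l ∅ hcons0, ?_⟩
  intro d hd hsat
  have hdl : d ∈ l := by simp [hl, Finset.mem_sort]
  rcases foldl_mem form l ∅ d hdl with h | h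
  · exact hd h
  · exact h hsat

end Brevis
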